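/- arXiv:2406.16747 — 5 statements merged into one kernel-verified Lean document; each statement's English description precedes it below -/
import Mathlib

section
/- If p* minimizes ‖p − z‖² over C = {p : 0 ≤ p ≤ 1, ∑ p_i = k}, then there exists τ ∈ ℝ such that p*_i = max(min(z_i − τ, 1), 0) for every coordinate i. -/
lemma sparsek_norm_sq {m : ℕ} (x : EuclideanSpace ℝ (Fin m)) :
    ‖x‖ ^ 2 = ∑ i, (x i) ^ 2 := by
  rw [EuclideanSpace.norm_eq, Real.sq_sqrt (by positivity)]
  simp [Real.norm_eq_abs, sq_abs]

lemma sparsek_exchange {m : ℕ} (z p : EuclideanSpace ℝ (Fin m)) (k : ℝ)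
    (hfeas : ∀ i, 0 ≤ p i ∧ p i ≤ 1)
    (hsum : ∑ i, p i = k)
    (hopt : ∀ q : EuclideanSpace ℝ (Fin m), (∀ i, 0 ≤ q i ∧ q i ≤ 1) →
      (∑ i, q i = k) → ∑ l, (p l - z l) ^ 2 ≤ ∑ l, (q l - z l) ^ 2)
    (i j : Fin m) (hi : p i < 1) (hj : 0 < p j) :
    z i - p i ≤ z j - p j := by
  rcases eq_or_ne i j with rfl | hij
  · exact le_refl _
  -- basic step: for each small ε > 0, get the inequality up to ε
  have key : ∀ ε : ℝ, 0 < ε → ε ≤ 1 - p i → ε ≤ p j →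
      z i - p i ≤ z j - p j + ε := by
    intro ε hε hε1 hε2
    set q : EuclideanSpace ℝ (Fin m) :=
      (WithLp.equiv 2 (Fin m → ℝ)).symm
        (fun l => if l = i then p i + ε else if l = j then p j - ε else p l) with hq
    have hqapp : ∀ l, q l = if l = i then p i + ε else if l = j then p j - ε else p l := by
      intro l; rfl
    have hqfeas : ∀ l, 0 ≤ q l ∧ q l ≤ 1 := by
      intro l
      rw [hqapp]
      split_ifs with h1 h2
      · exact ⟨by linarith [(hfeas i).1], by linarith⟩
      · exact ⟨by linarith, by linarith [(hfeas j).2]⟩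
      · exact hfeas l
    have hqsum : ∑ l, q l = k := by
      have hd : ∀ l, q l = p l + (if l = i then ε else 0) - (if l = j then ε else 0) := by
        intro l
        rw [hqapp]
        rcases eq_or_ne l i with rfl | hli
        · simp [hij]
        · rcases eq_or_ne l j with rfl | hlj
          · simp [hli]
          · simp [hli, hlj]
      calc ∑ l, q l = ∑ l, (p l + (if l = i then ε else 0) - (if l = j then ε else 0)) :=
            Finset.sum_congr rfl (fun l _ => hd l)
        _ = (∑ l, p l) + ε - ε := by
            rw [Finset.sum_sub_distrib, Finset.sum_add_distrib]
            simp
        _ = k := by rw [hsum]; ring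
    have hle := hopt q hqfeas hqsum
    -- compute the difference of the two sums
    have hdiff : ∑ l, (q l - z l) ^ 2 - ∑ l, (p l - z l) ^ 2
        = 2 * ε * ((p i - z i) - (p j - z j)) + 2 * ε ^ 2 := by
      rw [← Finset.sum_sub_distrib]
      have : ∀ l ∈ Finset.univ, l ≠ i → l ≠ j →
          (q l - z l) ^ 2 - (p l - z l) ^ 2 = 0 := by
        intro l _ hli hlj
        rw [hqapp]
        simp [hli, hlj]
      rw [Finset.sum_eq_add_of_mem i j (Finset.mem_univ i) (Finset.mem_univ j) hij
        (fun c _ hc => this c (Finset.mem_univ c) hc.1 hc.2)]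
      have hqi : q i = p i + ε := by rw [hqapp]; simp
      have hqj : q j = p j - ε := by
        rw [hqapp, if_neg (Ne.symm hij), if_pos rfl]
      rw [hqi, hqj]
      ring
    nlinarith [hle, hdiff]
  -- drive ε to 0
  by_contra h
  push_neg at h
  set ε := min ((z i - p i) - (z j - p j)) (min (1 - p i) (p j)) with hε
  have hεpos : 0 < ε := by
    apply lt_min (by linarith) (lt_min (by linarith) hj)
  have h1 : ε ≤ 1 - p i := le_trans (min_le_right _ _) (min_le_left _ _)
  have h2 : ε ≤ p j := le_trans (min_le_right _ _) (min_le_right _ _)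
  have h3 : ε ≤ (z i - p i) - (z j - p j) := min_le_left _ _
  have := key ε hεpos h1 h2
  -- z i - p i ≤ z j - p j + ε but ε ≤ (z i - p i) - (z j - p j), and ε < gap? need strict
  -- we have z i - p i ≤ z j - p j + ε ⇒ gap ≤ ε ≤ gap, so ε = gap; but then use key with ε/2
  have h4 := key (ε / 2) (by linarith) (by linarith) (by linarith)
  linarith

/-- Soft-thresholding form of the SparseK projection: a minimizer of `‖p - z‖²`
over `C = {p : 0 ≤ p ≤ 1, ∑ pᵢ = k}` has the form `pᵢ = max(min(zᵢ - τ, 1), 0)`. -/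
theorem sparsek_minimizer_is_soft_threshold
    (m : ℕ) (hm : 0 < m) (k : ℝ) (hk0 : 0 < k) (hkm : k < (m : ℝ))
    (z : EuclideanSpace ℝ (Fin m))
    (C : Set (EuclideanSpace ℝ (Fin m)))
    (hC : C = {p | (∀ i, 0 ≤ p i ∧ p i ≤ 1) ∧ ∑ i, p i = k})
    (p : EuclideanSpace ℝ (Fin m))
    (hp : p ∈ C ∧ ∀ q ∈ C, ‖p - z‖ ^ 2 ≤ ‖q - z‖ ^ 2) :
    ∃ τ : ℝ, ∀ i, p i = max (min (z i - τ) 1) 0 := by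
  subst hC
  obtain ⟨⟨hfeas, hsum⟩, hopt⟩ := hp
  have hsubapp : ∀ (x : EuclideanSpace ℝ (Fin m)) (l : Fin m), (x - z) l = x l - z l := by
    intro x l; rfl
  have hopt' : ∀ q : EuclideanSpace ℝ (Fin m), (∀ i, 0 ≤ q i ∧ q i ≤ 1) →
      (∑ i, q i = k) → ∑ l, (p l - z l) ^ 2 ≤ ∑ l, (q l - z l) ^ 2 := by
    intro q hq1 hq2
    have := hopt q ⟨hq1, hq2⟩
    rwa [sparsek_norm_sq, sparsek_norm_sq] at this
    -- note: goal may need hsubapp rewriting; handled below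
  have hex := fun i j hi hj => sparsek_exchange z p k hfeas hsum hopt' i j hi hj
  -- T = coordinates with p < 1 is nonempty
  have hTne : ∃ j, p j < 1 := by
    by_contra h
    push_neg at h
    have : ∀ j, p j = 1 := fun j => le_antisymm (hfeas j).2 (h j)
    have : ∑ i, p i = (m : ℝ) := by
      simp [this]
    rw [hsum] at this
    linarith
  set T : Finset (Fin m) := Finset.univ.filter (fun j => p j < 1) with hT
  have hTne' : T.Nonempty := by
    obtain ⟨j, hj⟩ := hTne
    exact ⟨j, by simp [hT, hj]⟩
  obtain ⟨j₀, hj₀T, hj₀max⟩ := T.exists_max_image (fun j => z j - p j) hTne'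
  have hj₀lt : p j₀ < 1 := by simpa [hT] using hj₀T
  refine ⟨z j₀ - p j₀, fun i => ?_⟩
  set τ := z j₀ - p j₀ with hτ
  rcases lt_or_eq_of_le (hfeas i).2 with hi1 | hi1
  · -- p i < 1
    have hiT : i ∈ T := by simp [hT, hi1]
    have hle : z i - p i ≤ τ := hj₀max i hiT
    rcases eq_or_lt_of_le (hfeas i).1 with hi0 | hi0
    · -- p i = 0: z i - τ ≤ 0
      rw [← hi0]
      have h0 : z i - τ ≤ 0 := by rw [← hi0] at hle; linarith
      exact (max_eq_right ((min_le_left _ _).trans h0)).symm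
    · -- 0 < p i < 1: τ = z i - p i
      have hge : τ ≤ z i - p i := hex j₀ i hj₀lt hi0
      have heq : z i - τ = p i := by linarith [le_antisymm hle hge]
      rw [heq, min_eq_left (le_of_lt hi1), max_eq_left (le_of_lt hi0)]
  · -- p i = 1
    have hge : τ ≤ z i - p i := hex j₀ i hj₀lt (by rw [hi1]; norm_num)
    have h1 : (1 : ℝ) ≤ z i - τ := by rw [hi1] at hge; linarith
    rw [hi1, min_eq_right h1, max_eq_left (by norm_num : (0:ℝ) ≤ 1)]
end

section
/- Let p(τ) = clip(z − τ·1) with clip(x) = max(min(x,1),0) applied coordinatewise. If τ satisfies ∑_i p(τ)_i = k, then p(τ) is the unique minimizer of ‖p − z‖² over C = {p : 0 ≤ p ≤ 1, ∑ p_i = k}. -/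
private lemma normsq_eq (m : ℕ) (x : EuclideanSpace ℝ (Fin m)) :
    ‖x‖ ^ 2 = ∑ i, x i ^ 2 := by
  rw [EuclideanSpace.norm_eq, Real.sq_sqrt (by positivity)]
  simp [sq_abs]

private lemma coord_ineq (a p q : ℝ) (hpa : p = max (min a 1) 0)
    (hq0 : 0 ≤ q) (hq1 : q ≤ 1) : 0 ≤ (p - a) * (q - p) := by
  rcases le_total a 0 with h | h
  · have : p = 0 := by rw [hpa, min_eq_left (h.trans zero_le_one), max_eq_right h]
    nlinarith
  rcases le_total 1 a with h1 | h1
  · have : p = 1 := by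
      rw [hpa, min_eq_right h1, max_eq_left zero_le_one]
    nlinarith
  · have : p = a := by rw [hpa, min_eq_left h1, max_eq_left h]
    nlinarith

/-- Sufficiency of the KKT characterization: if the clipped vector
`p(τ)ᵢ = max(min(zᵢ - τ, 1), 0)` has coordinate sum `k`, then it is the
unique minimizer of `‖p - z‖²` over `C = {p : 0 ≤ p ≤ 1, ∑ pᵢ = k}`. -/
theorem sparsek_clip_with_correct_sum_is_unique_minimizer
    (m : ℕ) (hm : 0 < m) (k : ℝ) (hk0 : 0 < k) (hkm : k < (m : ℝ))
    (z : EuclideanSpace ℝ (Fin m))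
    (C : Set (EuclideanSpace ℝ (Fin m)))
    (hC : C = {p | (∀ i, 0 ≤ p i ∧ p i ≤ 1) ∧ ∑ i, p i = k})
    (τ : ℝ) (p : EuclideanSpace ℝ (Fin m))
    (hp : ∀ i, p i = max (min (z i - τ) 1) 0)
    (hsum : ∑ i, p i = k) :
    (p ∈ C ∧ ∀ q ∈ C, ‖p - z‖ ^ 2 ≤ ‖q - z‖ ^ 2) ∧
      ∀ q ∈ C, (∀ r ∈ C, ‖q - z‖ ^ 2 ≤ ‖r - z‖ ^ 2) → q = p := by
  have hpC : p ∈ C := by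
    rw [hC]
    refine ⟨fun i => ?_, hsum⟩
    rw [hp i]
    constructor
    · exact le_max_right _ _
    · exact max_le (min_le_right _ _) zero_le_one
  -- key inequality
  have key : ∀ q ∈ C, ‖p - z‖ ^ 2 + ‖q - p‖ ^ 2 ≤ ‖q - z‖ ^ 2 := by
    intro q hq
    rw [hC] at hq
    obtain ⟨hqb, hqs⟩ := hq
    have hcross : 0 ≤ ∑ i, (p i - z i) * (q i - p i) := by
      have h1 : 0 ≤ ∑ i, (p i - (z i - τ)) * (q i - p i) :=
        Finset.sum_nonneg fun i _ =>
          coord_ineq (z i - τ) (p i) (q i) (hp i) (hqb i).1 (hqb i).2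
      have h2 : ∑ i, (p i - (z i - τ)) * (q i - p i)
          = ∑ i, (p i - z i) * (q i - p i) + τ * (∑ i, q i - ∑ i, p i) := by
        rw [← Finset.sum_sub_distrib, Finset.mul_sum, ← Finset.sum_add_distrib]
        congr 1; ext i; ring
      rw [h2, hqs, hsum] at h1
      simpa using h1
    have hn1 := normsq_eq m (p - z)
    have hn2 := normsq_eq m (q - p)
    have hn3 := normsq_eq m (q - z)
    simp only [PiLp.sub_apply] at hn1 hn2 hn3
    rw [hn1, hn2, hn3]
    have : ∑ i, (q i - z i) ^ 2
        = ∑ i, (p i - z i) ^ 2 + ∑ i, (q i - p i) ^ 2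
          + 2 * ∑ i, (p i - z i) * (q i - p i) := by
      rw [Finset.mul_sum, ← Finset.sum_add_distrib, ← Finset.sum_add_distrib]
      congr 1; ext i; ring
    linarith
  refine ⟨⟨hpC, fun q hq => ?_⟩, fun q hq hmin => ?_⟩
  · have := key q hq
    nlinarith [sq_nonneg ‖q - p‖]
  · have h1 := key q hq
    have h2 := hmin p hpC
    have : ‖q - p‖ ^ 2 ≤ 0 := by linarith
    have : ‖q - p‖ = 0 := by nlinarith [norm_nonneg (q - p)]
    have := norm_eq_zero.mp this
    have := sub_eq_zero.mp this
    exact this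
end

section
/- Exactness on integer k with well-separated scores: if z has at least k coordinates with z_i ≥ τ + 1 where τ is the SparseK threshold, and the rest satisfy z_i ≤ τ, then SparseK(z,k) is exactly the 0/1 indicator of the top-k coordinates of z. -/
/-- Exactness on integer `k` with well-separated scores: if no score lies
strictly between `τ` and `τ + 1`, and at least `k` coordinates satisfy
`zᵢ ≥ τ + 1`, then `SparseK(z, k)` is exactly the 0/1 indicator of the
top-`k` coordinates of `z`. -/
theorem sparsek_exact_topk_when_separated
    (m k : ℕ) (hk : 0 < k) (hkm : k ≤ m)
    (z : Fin m → ℝ) (τ : ℝ) (p : Fin m → ℝ)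
    (hp : ∀ i, p i = max (min (z i - τ) 1) 0)
    (hsum : ∑ i, p i = (k : ℝ))
    (T : Finset (Fin m)) (hT : ∀ i, i ∈ T ↔ τ + 1 ≤ z i)
    (hcard : k ≤ T.card)
    (hgap : ∀ i, τ + 1 ≤ z i ∨ z i ≤ τ) :
    T.card = k ∧ ∀ i, p i = if i ∈ T then 1 else 0 := by
  have hpi : ∀ i, p i = if i ∈ T then 1 else 0 := by
    intro i
    rcases hgap i with h | h
    · have hi : i ∈ T := (hT i).mpr h
      rw [if_pos hi, hp i, min_eq_right (by linarith), max_eq_left (by norm_num)]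
    · have hi : i ∉ T := fun hmem => by linarith [(hT i).mp hmem]
      rw [if_neg hi, hp i, max_eq_right]
      exact min_le_of_left_le (by linarith)
  have hsum' : ∑ i, p i = (T.card : ℝ) := by
    rw [Finset.sum_congr rfl (fun i _ => hpi i)]
    simp
  have : (T.card : ℝ) = (k : ℝ) := by rw [← hsum', hsum]
  exact ⟨Nat.cast_injective this, hpi⟩
end

section
/- On a region where the fractional set S = {i : τ < z_i < τ+1} is fixed and nonempty, the Jacobian of SparseK at z is J = Diag(s) − s sᵀ/|S|, where s is the 0/1 indicator vector of S. -/
/-- On a region where the saturated set `F` and the (nonempty) fractional set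
`S` of SparseK are fixed, SparseK is differentiable at `z` with Jacobian
`J = Diag(s) - s sᵀ / |S|`, i.e. `(Jv)ᵢ = sᵢ (vᵢ - (∑_{j∈S} vⱼ)/|S|)`,
where `s` is the 0/1 indicator of `S`. -/
theorem sparsek_jacobian_on_fixed_region
    (m : ℕ) (k : ℝ) (F S : Finset (Fin m)) (hSne : S.Nonempty)
    (hFS : Disjoint F S)
    (τ : (Fin m → ℝ) → ℝ)
    (hτ : ∀ y, τ y = (∑ j ∈ S, y j + (F.card : ℝ) - k) / (S.card : ℝ))
    (g : (Fin m → ℝ) → (Fin m → ℝ))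
    (hg : ∀ y i, g y i = max (min (y i - τ y) 1) 0)
    (z : Fin m → ℝ)
    (hF : ∀ i ∈ F, 1 < z i - τ z)
    (hS : ∀ i ∈ S, 0 < z i - τ z ∧ z i - τ z < 1)
    (hout : ∀ i, i ∉ F → i ∉ S → z i - τ z < 0) :
    ∃ L : (Fin m → ℝ) →L[ℝ] (Fin m → ℝ), HasFDerivAt g L z ∧
      ∀ v i, L v i = (if i ∈ S then (1 : ℝ) else 0) *
        (v i - (∑ j ∈ S, v j) / (S.card : ℝ)) := by
  have hc0 : (S.card : ℝ) ≠ 0 := by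
    have := Finset.card_pos.mpr hSne; positivity
  set c : ℝ := (S.card : ℝ)
  -- the linear map
  let ℓ : (Fin m → ℝ) →ₗ[ℝ] (Fin m → ℝ) :=
    { toFun := fun v i => (if i ∈ S then (1 : ℝ) else 0) * (v i - (∑ j ∈ S, v j) / c)
      map_add' := by
        intro v w; funext i
        simp only [Pi.add_apply, Finset.sum_add_distrib, add_div]
        ring
      map_smul' := by
        intro a v; funext i
        simp only [Pi.smul_apply, smul_eq_mul, ← Finset.mul_sum, mul_div_assoc,
          RingHom.id_apply]
        ring }
  let L : (Fin m → ℝ) →L[ℝ] (Fin m → ℝ) := ℓ.toContinuousLinearMap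
  refine ⟨L, ?_, fun v i => rfl⟩
  -- the locally-equal affine function
  set h : (Fin m → ℝ) → (Fin m → ℝ) :=
    fun y i => if i ∈ F then (1 : ℝ) else if i ∈ S then y i - τ y else 0 with hh
  have hcont : ∀ i : Fin m, ContinuousAt (fun y : Fin m → ℝ => y i - τ y) z := by
    intro i
    have : (fun y : Fin m → ℝ => y i - τ y)
        = fun y => y i - (∑ j ∈ S, y j + (F.card : ℝ) - k) / c := by
      funext y; rw [hτ]
    rw [this]
    exact ((continuous_apply i).sub
      ((((continuous_finset_sum S fun j _ => continuous_apply j).add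
        continuous_const).sub continuous_const).div_const c)).continuousAt
  have hLaff : HasFDerivAt h L z := by
    have hcvec : h = fun y =>
        (fun i => if i ∈ F then (1 : ℝ) else if i ∈ S then (k - (F.card : ℝ)) / c else 0)
          + ℓ y := by
      funext y i
      by_cases hiF : i ∈ F
      · have hiS : i ∉ S := fun hiS => (Finset.disjoint_left.mp hFS hiF) hiS
        simp [hh, hiF, hiS, ℓ]
      · by_cases hiS : i ∈ S
        · simp only [hh, hiF, hiS, if_false, if_true, Pi.add_apply]
          show y i - τ y = (k - (F.card : ℝ)) / c + _
          simp only [ℓ, LinearMap.coe_mk, AddHom.coe_mk, hiS, if_true, one_mul, hτ]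
          field_simp
          ring
        · simp [hh, hiF, hiS, ℓ]
    rw [hcvec]
    exact (ℓ.toContinuousLinearMap.hasFDerivAt (x := z)).const_add _
  refine hLaff.congr_of_eventuallyEq ?_
  have key : ∀ i : Fin m, ∀ᶠ y in nhds z, g y i = h y i := by
    intro i
    by_cases hiF : i ∈ F
    · have : ∀ᶠ y in nhds z, 1 < y i - τ y :=
        (hcont i).eventually (eventually_gt_nhds (hF i hiF))
      filter_upwards [this] with y hy
      rw [hg, min_eq_right hy.le, max_eq_left zero_le_one]
      simp [hh, hiF]
    · by_cases hiS : i ∈ S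
      · have h1 : ∀ᶠ y in nhds z, 0 < y i - τ y :=
          (hcont i).eventually (eventually_gt_nhds (hS i hiS).1)
        have h2 : ∀ᶠ y in nhds z, y i - τ y < 1 :=
          (hcont i).eventually (eventually_lt_nhds (hS i hiS).2)
        filter_upwards [h1, h2] with y hy1 hy2
        rw [hg, min_eq_left hy2.le, max_eq_left hy1.le]
        simp [hh, hiF, hiS]
      · have : ∀ᶠ y in nhds z, y i - τ y < 0 :=
          (hcont i).eventually (eventually_lt_nhds (hout i hiF hiS))
        filter_upwards [this] with y hy
        rw [hg, min_eq_left (hy.trans zero_lt_one).le, max_eq_right hy.le]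
        simp [hh, hiF, hiS]
  filter_upwards [Filter.eventually_all.mpr key] with y hy
  exact funext hy
end

section
/- At the optimal pair (u*, w*) in the SparseK threshold search, with τ = (∑_{u* < j ≤ w*} z_{(j)} + u* − k)/(w* − u*) and sorted coordinates z_{(1)} > … > z_{(m)}, the conditions z_{(u*)} ≥ τ + 1 > z_{(u*+1)} and z_{(w*)} > τ ≥ z_{(w*+1)} hold, and conversely any pair (u,w) satisfying these conditions yields the correct threshold τ(z). -/
lemma clip_one {a : ℝ} (h : 1 ≤ a) : max (min a 1) 0 = 1 := by
  rw [min_eq_right h]; exact max_eq_left zero_le_one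

lemma one_le_of_clip {a : ℝ} (h : max (min a 1) 0 = 1) : 1 ≤ a := by
  by_contra h'; push_neg at h'
  rw [min_eq_left h'.le] at h
  rcases max_choice a 0 with hc | hc <;> rw [hc] at h <;> linarith

lemma clip_lt_one {a : ℝ} (h : max (min a 1) 0 ≠ 1) : a < 1 := by
  by_contra h'; push_neg at h'; exact h (clip_one h')

lemma clip_pos {a : ℝ} : 0 < max (min a 1) 0 ↔ 0 < a := by
  constructor
  · intro h
    by_contra h'; push_neg at h'
    have hm : min a 1 ≤ 0 := le_trans (min_le_left _ _) h'
    rw [max_eq_right hm] at h; exact lt_irrefl _ h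
  · intro h; exact lt_max_iff.2 (Or.inl (lt_min h one_pos))

lemma clip_mid {a : ℝ} (h0 : 0 < a) (h1 : a ≤ 1) : max (min a 1) 0 = a := by
  rw [min_eq_left h1]; exact max_eq_left h0.le

lemma clip_mono {a b : ℝ} (h : a ≤ b) : max (min a 1) 0 ≤ max (min b 1) 0 :=
  max_le_max (min_le_min h le_rfl) le_rfl

lemma clip_strict {a b : ℝ} (hab : a < b) (h0 : 0 < a) (h1 : a < 1) :
    max (min a 1) 0 < max (min b 1) 0 := by
  rw [clip_mid h0 h1.le]
  exact (lt_min hab h1).trans_le (le_max_left _ _)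

lemma downset_eq_Icc (m : ℕ) (A : Finset ℕ) (hA : A ⊆ Finset.Icc 1 m)
    (hdc : ∀ i j, 1 ≤ i → i ≤ j → j ∈ A → i ∈ A) :
    A = Finset.Icc 1 A.card := by
  ext j
  simp only [Finset.mem_Icc]
  constructor
  · intro hj
    refine ⟨(Finset.mem_Icc.1 (hA hj)).1, ?_⟩
    have hsub : Finset.Icc 1 j ⊆ A := by
      intro i hi
      exact hdc i j (Finset.mem_Icc.1 hi).1 (Finset.mem_Icc.1 hi).2 hj
    have := Finset.card_le_card hsub
    simpa using this
  · rintro ⟨h1, h2⟩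
    by_contra hj
    have hsub : A ⊆ Finset.Icc 1 (j - 1) := by
      intro i hi
      have him := Finset.mem_Icc.1 (hA hi)
      refine Finset.mem_Icc.2 ⟨him.1, ?_⟩
      by_contra hij; push_neg at hij
      exact hj (hdc j i h1 (by omega) hi)
    have := Finset.card_le_card hsub
    simp only [Nat.card_Icc] at this
    omega

lemma sum_decomp (m u w : ℕ) (huw : u ≤ w) (hwm : w ≤ m) (z : ℕ → ℝ) (t : ℝ)
    (h1 : ∀ j ∈ Finset.Ioc 0 u, 1 ≤ z j - t)
    (h2 : ∀ j ∈ Finset.Ioc u w, 0 < z j - t ∧ z j - t ≤ 1)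
    (h3 : ∀ j ∈ Finset.Ioc w m, z j - t ≤ 0) :
    ∑ j ∈ Finset.Icc 1 m, max (min (z j - t) 1) 0
      = u + ∑ j ∈ Finset.Ioc u w, (z j - t) := by
  have e : Finset.Icc 1 m = Finset.Ioc 0 m := by
    ext j; simp only [Finset.mem_Icc, Finset.mem_Ioc]; omega
  rw [e, ← Finset.sum_Ioc_consecutive _ (Nat.zero_le u) (huw.trans hwm),
      ← Finset.sum_Ioc_consecutive _ huw hwm]
  have s1 : ∑ j ∈ Finset.Ioc 0 u, max (min (z j - t) 1) 0 = (u : ℝ) := by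
    rw [Finset.sum_congr rfl (fun j hj => clip_one (h1 j hj))]
    simp
  have s2 : ∑ j ∈ Finset.Ioc u w, max (min (z j - t) 1) 0
      = ∑ j ∈ Finset.Ioc u w, (z j - t) :=
    Finset.sum_congr rfl (fun j hj => clip_mid (h2 j hj).1 (h2 j hj).2)
  have s3 : ∑ j ∈ Finset.Ioc w m, max (min (z j - t) 1) 0 = 0 := by
    apply Finset.sum_eq_zero
    intro j hj
    exact max_eq_right (le_trans (min_le_left _ _) (h3 j hj))
  rw [s1, s2, s3]; ring

/-- Correctness of the threshold search of the SparseK algorithm. With scores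
`z 1 > z 2 > … > z m`, the true threshold `τ` (with `∑ clip(zⱼ - τ) = k`),
`u = |{j : clip(zⱼ-τ) = 1}|`, `w = |{j : clip(zⱼ-τ) > 0}|` and `u < w`:
the conditions `z u ≥ τ+1 > z (u+1)` and `z w > τ ≥ z (w+1)` hold (with the
conventions `z 0 = +∞`, `z (m+1) = -∞` expressed by disjunctions), together with
`τ = (∑_{u<j≤w} z j + u - k)/(w - u)`; conversely any pair `(u', w')`
satisfying these conditions yields the correct threshold `τ`. -/
theorem sparsek_threshold_search_correct
    (m : ℕ) (k : ℝ) (hk0 : 0 < k) (hkm : k < (m : ℝ))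
    (z : ℕ → ℝ) (hz : ∀ i j, 1 ≤ i → i < j → j ≤ m → z j < z i)
    (τ : ℝ)
    (hsum : ∑ j ∈ Finset.Icc 1 m, max (min (z j - τ) 1) 0 = k)
    (u w : ℕ)
    (hu : u = ((Finset.Icc 1 m).filter (fun j => max (min (z j - τ) 1) 0 = 1)).card)
    (hw : w = ((Finset.Icc 1 m).filter (fun j => 0 < max (min (z j - τ) 1) 0)).card)
    (huw : u < w) :
    ((u = 0 ∨ τ + 1 ≤ z u) ∧ (u = m ∨ z (u + 1) < τ + 1) ∧
     (w = 0 ∨ τ < z w) ∧ (w = m ∨ z (w + 1) ≤ τ) ∧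
     τ = (∑ j ∈ Finset.Icc (u + 1) w, z j + (u : ℝ) - k) / ((w : ℝ) - (u : ℝ))) ∧
    (∀ u' w' : ℕ, u' < w' → w' ≤ m → ∀ τ' : ℝ,
      τ' = (∑ j ∈ Finset.Icc (u' + 1) w', z j + (u' : ℝ) - k) / ((w' : ℝ) - (u' : ℝ)) →
      (u' = 0 ∨ τ' + 1 ≤ z u') → (u' = m ∨ z (u' + 1) < τ' + 1) →
      (w' = 0 ∨ τ' < z w') → (w' = m ∨ z (w' + 1) ≤ τ') →
      τ' = τ) := by
  have hzm : ∀ i j, 1 ≤ i → i ≤ j → j ≤ m → z j ≤ z i := by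
    intro i j hi hij hjm
    rcases eq_or_lt_of_le hij with h | h
    · rw [h]
    · exact (hz i j hi h hjm).le
  -- the two filter sets are initial intervals
  have hAuIcc : (Finset.Icc 1 m).filter (fun j => max (min (z j - τ) 1) 0 = 1)
      = Finset.Icc 1 u := by
    rw [hu]
    apply downset_eq_Icc m _ (Finset.filter_subset _ _)
    intro i j hi hij hj
    simp only [Finset.mem_filter, Finset.mem_Icc] at hj ⊢
    have hjm := hj.1.2
    refine ⟨⟨hi, hij.trans hjm⟩, ?_⟩
    have h1 : 1 ≤ z j - τ := one_le_of_clip hj.2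
    exact clip_one (by linarith [hzm i j hi hij hjm])
  have hAwIcc : (Finset.Icc 1 m).filter (fun j => 0 < max (min (z j - τ) 1) 0)
      = Finset.Icc 1 w := by
    rw [hw]
    apply downset_eq_Icc m _ (Finset.filter_subset _ _)
    intro i j hi hij hj
    simp only [Finset.mem_filter, Finset.mem_Icc] at hj ⊢
    have hjm := hj.1.2
    refine ⟨⟨hi, hij.trans hjm⟩, ?_⟩
    have h1 : 0 < z j - τ := clip_pos.1 hj.2
    exact clip_pos.2 (by linarith [hzm i j hi hij hjm])
  have hwm : w ≤ m := by
    rw [hw]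
    calc ((Finset.Icc 1 m).filter _).card ≤ (Finset.Icc 1 m).card :=
          Finset.card_le_card (Finset.filter_subset _ _)
      _ = m := by simp
  have hw1 : 1 ≤ w := by omega
  -- membership characterizations
  have memu : ∀ j, 1 ≤ j → j ≤ m → (max (min (z j - τ) 1) 0 = 1 ↔ j ≤ u) := by
    intro j h1 h2
    constructor
    · intro h
      have : j ∈ Finset.Icc 1 u := by
        rw [← hAuIcc]; exact Finset.mem_filter.2 ⟨Finset.mem_Icc.2 ⟨h1, h2⟩, h⟩
      exact (Finset.mem_Icc.1 this).2
    · intro h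
      have : j ∈ (Finset.Icc 1 m).filter (fun j => max (min (z j - τ) 1) 0 = 1) := by
        rw [hAuIcc]; exact Finset.mem_Icc.2 ⟨h1, h⟩
      exact (Finset.mem_filter.1 this).2
  have memw : ∀ j, 1 ≤ j → j ≤ m → (0 < max (min (z j - τ) 1) 0 ↔ j ≤ w) := by
    intro j h1 h2
    constructor
    · intro h
      have : j ∈ Finset.Icc 1 w := by
        rw [← hAwIcc]; exact Finset.mem_filter.2 ⟨Finset.mem_Icc.2 ⟨h1, h2⟩, h⟩
      exact (Finset.mem_Icc.1 this).2
    · intro h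
      have : j ∈ (Finset.Icc 1 m).filter (fun j => 0 < max (min (z j - τ) 1) 0) := by
        rw [hAwIcc]; exact Finset.mem_Icc.2 ⟨h1, h⟩
      exact (Finset.mem_filter.1 this).2
  -- interval facts for τ
  have hIu : ∀ j ∈ Finset.Ioc 0 u, 1 ≤ z j - τ := by
    intro j hj
    have hj' := Finset.mem_Ioc.1 hj
    exact one_le_of_clip ((memu j hj'.1 (by omega)).2 hj'.2)
  have hImid : ∀ j ∈ Finset.Ioc u w, 0 < z j - τ ∧ z j - τ < 1 := by
    intro j hj
    have hj' := Finset.mem_Ioc.1 hj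
    have h1 : 1 ≤ j := by omega
    have h2 : j ≤ m := by omega
    constructor
    · exact clip_pos.1 ((memw j h1 h2).2 hj'.2)
    · have hne : max (min (z j - τ) 1) 0 ≠ 1 :=
        fun hcl => absurd ((memu j h1 h2).1 hcl) (by omega)
      linarith [clip_lt_one hne]
  have hIw : ∀ j ∈ Finset.Ioc w m, z j - τ ≤ 0 := by
    intro j hj
    have hj' := Finset.mem_Ioc.1 hj
    have : ¬ 0 < max (min (z j - τ) 1) 0 :=
      fun h => absurd ((memw j (by omega) hj'.2).1 h) (by omega)
    by_contra h; push_neg at h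
    exact this (clip_pos.2 h)
  -- τ sum identity
  have hkey : k = (u : ℝ) + (∑ j ∈ Finset.Ioc u w, z j - ((w : ℝ) - u) * τ) := by
    have := sum_decomp m u w huw.le hwm z τ hIu
      (fun j hj => ⟨(hImid j hj).1, (hImid j hj).2.le⟩) hIw
    rw [hsum] at this
    rw [this]
    rw [Finset.sum_sub_distrib, Finset.sum_const, Nat.card_Ioc, nsmul_eq_mul]
    push_cast [Nat.cast_sub huw.le]
    ring
  have hIccIoc : ∀ a b : ℕ, Finset.Icc (a + 1) b = Finset.Ioc a b := by
    intro a b; ext j; simp only [Finset.mem_Icc, Finset.mem_Ioc]; omega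
  have hwu : (0 : ℝ) < (w : ℝ) - u := by
    have : (u : ℝ) < w := by exact_mod_cast huw
    linarith
  have hτeq : τ = (∑ j ∈ Finset.Icc (u + 1) w, z j + (u : ℝ) - k) / ((w : ℝ) - (u : ℝ)) := by
    rw [hIccIoc]
    field_simp
    linarith [hkey]
  refine ⟨⟨?_, ?_, ?_, ?_, hτeq⟩, ?_⟩
  · -- u = 0 ∨ τ + 1 ≤ z u
    rcases Nat.eq_zero_or_pos u with h | h
    · exact Or.inl h
    · right
      have := one_le_of_clip ((memu u h (by omega)).2 le_rfl)
      linarith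
  · -- u = m ∨ z (u+1) < τ + 1
    rcases eq_or_lt_of_le (show u ≤ m by omega) with h | h
    · exact Or.inl h
    · right
      have hne : max (min (z (u + 1) - τ) 1) 0 ≠ 1 :=
        fun hcl => absurd ((memu (u + 1) (by omega) (by omega)).1 hcl) (by omega)
      linarith [clip_lt_one hne]
  · -- w = 0 ∨ τ < z w
    right
    have := clip_pos.1 ((memw w hw1 hwm).2 le_rfl)
    linarith
  · -- w = m ∨ z (w+1) ≤ τ
    rcases eq_or_lt_of_le hwm with h | h
    · exact Or.inl h
    · right
      have := hIw (w + 1) (Finset.mem_Ioc.2 ⟨by omega, by omega⟩)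
      linarith
  · -- converse
    intro u' w' hu'w' hw'm τ' hτ' hc1 hc2 hc3 hc4
    have hu'm : u' < m := lt_of_lt_of_le hu'w' hw'm
    have hzu' : u' ≠ 0 → τ' + 1 ≤ z u' := fun h => hc1.resolve_left h
    have hzu1 : z (u' + 1) < τ' + 1 := hc2.resolve_left (by omega)
    have hzw' : τ' < z w' := hc3.resolve_left (by omega)
    -- interval facts for τ'
    have hIu' : ∀ j ∈ Finset.Ioc 0 u', 1 ≤ z j - τ' := by
      intro j hj
      have hj' := Finset.mem_Ioc.1 hj
      have := hzu' (by omega)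
      have := hzm j u' hj'.1 hj'.2 (by omega)
      linarith
    have hImid' : ∀ j ∈ Finset.Ioc u' w', 0 < z j - τ' ∧ z j - τ' < 1 := by
      intro j hj
      have hj' := Finset.mem_Ioc.1 hj
      have hle1 : z j ≤ z (u' + 1) := hzm (u' + 1) j (by omega) (by omega) (by omega)
      have hge : z w' ≤ z j := hzm j w' (by omega) hj'.2 hw'm
      constructor <;> linarith
    have hIw' : ∀ j ∈ Finset.Ioc w' m, z j - τ' ≤ 0 := by
      intro j hj
      have hj' := Finset.mem_Ioc.1 hj
      have hzw1 : z (w' + 1) ≤ τ' := hc4.resolve_left (by omega)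
      have := hzm (w' + 1) j (by omega) (by omega) hj'.2
      linarith
    -- sum at τ' also equals k
    have hsum' : ∑ j ∈ Finset.Icc 1 m, max (min (z j - τ') 1) 0 = k := by
      have hdec := sum_decomp m u' w' hu'w'.le hw'm z τ' hIu'
        (fun j hj => ⟨(hImid' j hj).1, (hImid' j hj).2.le⟩) hIw'
      rw [hdec, Finset.sum_sub_distrib, Finset.sum_const, Nat.card_Ioc, nsmul_eq_mul]
      have hwu' : (0 : ℝ) < (w' : ℝ) - u' := by
        have : (u' : ℝ) < w' := by exact_mod_cast hu'w'
        linarith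
      rw [hτ', hIccIoc]
      push_cast [Nat.cast_sub hu'w'.le]
      field_simp
      ring
    -- strict monotonicity argument
    rcases lt_trichotomy τ' τ with h | h | h
    · exfalso
      have hmidw := hImid w (Finset.mem_Ioc.2 ⟨huw, le_rfl⟩)
      have hlt : ∑ j ∈ Finset.Icc 1 m, max (min (z j - τ) 1) 0
          < ∑ j ∈ Finset.Icc 1 m, max (min (z j - τ') 1) 0 := by
        apply Finset.sum_lt_sum
        · intro j _; exact clip_mono (by linarith)
        · exact ⟨w, Finset.mem_Icc.2 ⟨hw1, hwm⟩,
            clip_strict (by linarith) hmidw.1 hmidw.2⟩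
      rw [hsum, hsum'] at hlt
      exact lt_irrefl _ hlt
    · exact h
    · exfalso
      have hmidw' := hImid' w' (Finset.mem_Ioc.2 ⟨hu'w', le_rfl⟩)
      have hlt : ∑ j ∈ Finset.Icc 1 m, max (min (z j - τ') 1) 0
          < ∑ j ∈ Finset.Icc 1 m, max (min (z j - τ) 1) 0 := by
        apply Finset.sum_lt_sum
        · intro j _; exact clip_mono (by linarith)
        · exact ⟨w', Finset.mem_Icc.2 ⟨by omega, hw'm⟩,
            clip_strict (by linarith) hmidw'.1 hmidw'.2⟩
      rw [hsum, hsum'] at hlt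
      exact lt_irrefl _ hlt
end
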